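/- If a fractional flow in a DAG with vertex capacities is maximal (i.e., for every source vertex not fully routed, every path from it to the sink contains a saturated vertex), then its value is at least 1/(d+1) times the maximum flow value, where d is the maximum number of capacitated vertices on any source-sink path. -/
import Mathlib


open Finset

/-- A maximal fractional path flow in a vertex-capacitated DAG has value at least
`1/(d+1)` times the optimum, where every path crosses at most `d` capacitated vertices.
Stated equivalently: any feasible flow `y` has value at most `(d+1)` times the value of
the maximal flow `x`. -/
theorem maximal_flow_competitive
    {ι V P : Type*} [Fintype ι] [Fintype V] [Fintype P] [DecidableEq ι] [DecidableEq V]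
    (src : P → ι) (thru : P → Finset V) (C : V → ℝ) (d : ℕ)
    (hd : ∀ p : P, (thru p).card ≤ d)
    (x : P → ℝ) (hx : ∀ p, 0 ≤ x p)
    (hsrc : ∀ i : ι, ∑ p ∈ univ.filter (fun p => src p = i), x p ≤ 1)
    (hcap : ∀ v : V, ∑ p ∈ univ.filter (fun p => v ∈ thru p), x p ≤ C v)
    (hmax : ∀ p : P, ∑ q ∈ univ.filter (fun q => src q = src p), x q < 1 →
      ∃ v ∈ thru p, ∑ q ∈ univ.filter (fun q => v ∈ thru q), x q = C v)
    (y : P → ℝ) (hy : ∀ p, 0 ≤ y p)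
    (hysrc : ∀ i : ι, ∑ p ∈ univ.filter (fun p => src p = i), y p ≤ 1)
    (hycap : ∀ v : V, ∑ p ∈ univ.filter (fun p => v ∈ thru p), y p ≤ C v) :
    ∑ p, y p ≤ (d + 1 : ℝ) * ∑ p, x p := by
  classical
  set F : V → ℝ := fun v => ∑ q ∈ univ.filter (fun q => v ∈ thru q), x q with hF
  set X : ι → ℝ := fun i => ∑ q ∈ univ.filter (fun q => src q = i), x q with hXdef
  set Sat : Finset V := univ.filter (fun v => F v = C v) with hSatdef
  have hXnn : ∀ i, 0 ≤ X i := fun i => Finset.sum_nonneg fun q _ => hx q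
  have key : ∀ p : P, (1:ℝ) ≤ X (src p) + ((thru p ∩ Sat).card : ℝ) := by
    intro p
    by_cases h : X (src p) < 1
    · obtain ⟨v, hv, hveq⟩ := hmax p h
      have hvs : v ∈ thru p ∩ Sat := by
        simp only [Finset.mem_inter, hSatdef, Finset.mem_filter, Finset.mem_univ, true_and]
        exact ⟨hv, hveq⟩
      have h1 : (1:ℝ) ≤ ((thru p ∩ Sat).card : ℝ) := by
        exact_mod_cast Finset.card_pos.mpr ⟨v, hvs⟩
      linarith [hXnn (src p)]
    · push_neg at h
      have : (0:ℝ) ≤ ((thru p ∩ Sat).card : ℝ) := Nat.cast_nonneg _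
      linarith
  have step1 : ∑ p, y p ≤ ∑ p, y p * (X (src p) + ((thru p ∩ Sat).card : ℝ)) := by
    apply Finset.sum_le_sum
    intro p _
    nth_rewrite 1 [← mul_one (y p)]
    exact mul_le_mul_of_nonneg_left (key p) (hy p)
  have split : ∑ p, y p * (X (src p) + ((thru p ∩ Sat).card : ℝ))
      = (∑ p, y p * X (src p)) + ∑ p, y p * ((thru p ∩ Sat).card : ℝ) := by
    rw [← Finset.sum_add_distrib]
    apply Finset.sum_congr rfl
    intro p _; ring
  have term1 : ∑ p, y p * X (src p) ≤ ∑ p, x p := by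
    have h1 : ∑ p, y p * X (src p)
        = ∑ i, ∑ p ∈ univ.filter (fun p => src p = i), y p * X (src p) :=
      (Finset.sum_fiberwise univ src (fun p => y p * X (src p))).symm
    have h2 : ∑ p, x p = ∑ i, X i := by
      rw [hXdef]
      exact (Finset.sum_fiberwise univ src x).symm
    rw [h1, h2]
    apply Finset.sum_le_sum
    intro i _
    have h3 : ∑ p ∈ univ.filter (fun p => src p = i), y p * X (src p)
        = X i * ∑ p ∈ univ.filter (fun p => src p = i), y p := by
      rw [Finset.mul_sum]
      apply Finset.sum_congr rfl
      intro p hp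
      rw [Finset.mem_filter] at hp
      rw [hp.2]; ring
    rw [h3]
    calc X i * ∑ p ∈ univ.filter (fun p => src p = i), y p
        ≤ X i * 1 := mul_le_mul_of_nonneg_left (hysrc i) (hXnn i)
      _ = X i := mul_one _
  have cardsum : ∀ p : P, ((thru p ∩ Sat).card : ℝ)
      = ∑ v ∈ Sat, if v ∈ thru p then (1:ℝ) else 0 := by
    intro p
    have : thru p ∩ Sat = Sat.filter (· ∈ thru p) := by
      rw [Finset.filter_mem_eq_inter, Finset.inter_comm]
    rw [this, Finset.card_filter]
    push_cast
    rfl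
  have e1 : ∀ (z : P → ℝ), ∑ p, z p * ((thru p ∩ Sat).card : ℝ)
      = ∑ v ∈ Sat, ∑ p ∈ univ.filter (fun p => v ∈ thru p), z p := by
    intro z
    simp_rw [cardsum, Finset.mul_sum, mul_ite, mul_one, mul_zero]
    rw [Finset.sum_comm]
    apply Finset.sum_congr rfl
    intro v _
    rw [Finset.sum_filter]
  have term2 : ∑ p, y p * ((thru p ∩ Sat).card : ℝ) ≤ (d:ℝ) * ∑ p, x p := by
    rw [e1 y]
    have h3 : ∑ v ∈ Sat, ∑ p ∈ univ.filter (fun p => v ∈ thru p), y p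
        ≤ ∑ v ∈ Sat, ∑ p ∈ univ.filter (fun p => v ∈ thru p), x p := by
      apply Finset.sum_le_sum
      intro v hv
      rw [hSatdef, Finset.mem_filter] at hv
      exact (hycap v).trans_eq hv.2.symm
    refine h3.trans ?_
    rw [← e1 x]
    calc ∑ p, x p * ((thru p ∩ Sat).card : ℝ)
        ≤ ∑ p, x p * (d:ℝ) := by
          apply Finset.sum_le_sum
          intro p _
          apply mul_le_mul_of_nonneg_left _ (hx p)
          exact_mod_cast le_trans (Finset.card_le_card Finset.inter_subset_left) (hd p)
      _ = (d:ℝ) * ∑ p, x p := by rw [Finset.mul_sum]; simp [mul_comm]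
  calc ∑ p, y p ≤ _ := step1
    _ = _ := split
    _ ≤ (∑ p, x p) + (d:ℝ) * ∑ p, x p := add_le_add term1 term2
    _ = (d + 1 : ℝ) * ∑ p, x p := by ring
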